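/- arXiv:math/0104113 — 2 statements merged into one kernel-verified Lean document; each statement's English description precedes it below -/
import Mathlib

section
/- Let p ≤ n and let x_{ij}, 1 ≤ i ≤ n, 1 ≤ j ≤ p, be i.i.d. real random variables whose common distribution is symmetric and has all moments finite; let X be the n×p matrix with entries x_{ij} and A_p = XᵀX. Let M_n = (y_{ij}) be an n×n real symmetric random matrix whose entries y_{ij} = y_{ji} for i ≤ j are i.i.d. with the same distribution as x_{11}. Then for every positive integer m, E[Trace(A_p^{m})] ≤ E[Trace(M_n^{2m})]. -/
open MeasureTheory ProbabilityTheory Filter Matrix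

section Moments
variable {ν : Measure ℝ} [IsProbabilityMeasure ν]

omit [IsProbabilityMeasure ν] in
lemma sosh_mom_odd (hνsymm : ν.map (fun x => -x) = ν) {k : ℕ} (hk : Odd k) :
    ∫ x, x ^ k ∂ν = 0 := by
  have h1 : ∫ x, x ^ k ∂ν = ∫ x, (-x) ^ k ∂ν := by
    conv_lhs => rw [← hνsymm]
    rw [integral_map (by fun_prop) (by fun_prop)]
  have h2 : ∫ x, (-x) ^ k ∂ν = - ∫ x, x ^ k ∂ν := by
    simp only [hk.neg_pow, integral_neg]
  linarith

omit [IsProbabilityMeasure ν] in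
lemma sosh_mom_nonneg (hνsymm : ν.map (fun x => -x) = ν) (k : ℕ) :
    0 ≤ ∫ x, x ^ k ∂ν := by
  rcases Nat.even_or_odd k with hk | hk
  · exact integral_nonneg fun x => hk.pow_nonneg x
  · rw [sosh_mom_odd hνsymm hk]

lemma sosh_mom_mul_le (hνmom : ∀ k : ℕ, Integrable (fun x => x ^ k) ν)
    {a b : ℕ} (ha : Even a) (hb : Even b) :
    (∫ x, x ^ a ∂ν) * ∫ x, x ^ b ∂ν ≤ ∫ x, x ^ (a + b) ∂ν := by
  have key : 0 ≤ ∫ z : ℝ × ℝ, (z.1 ^ a - z.2 ^ a) * (z.1 ^ b - z.2 ^ b) ∂(ν.prod ν) := by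
    refine integral_nonneg fun z => ?_
    show (0:ℝ) ≤ (z.1 ^ a - z.2 ^ a) * (z.1 ^ b - z.2 ^ b)
    rcases le_total |z.1| |z.2| with h | h
    · have h1 : z.1 ^ a ≤ z.2 ^ a := by
        rw [← ha.pow_abs z.1, ← ha.pow_abs z.2]; exact pow_le_pow_left₀ (abs_nonneg _) h a
      have h2 : z.1 ^ b ≤ z.2 ^ b := by
        rw [← hb.pow_abs z.1, ← hb.pow_abs z.2]; exact pow_le_pow_left₀ (abs_nonneg _) h b
      nlinarith [mul_nonneg (sub_nonneg.2 h1) (sub_nonneg.2 h2)]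
    · have h1 : z.2 ^ a ≤ z.1 ^ a := by
        rw [← ha.pow_abs z.1, ← ha.pow_abs z.2]; exact pow_le_pow_left₀ (abs_nonneg _) h a
      have h2 : z.2 ^ b ≤ z.1 ^ b := by
        rw [← hb.pow_abs z.1, ← hb.pow_abs z.2]; exact pow_le_pow_left₀ (abs_nonneg _) h b
      nlinarith [mul_nonneg (sub_nonneg.2 h1) (sub_nonneg.2 h2)]
  have hiab : Integrable (fun z : ℝ × ℝ => z.1 ^ a * z.2 ^ b) (ν.prod ν) :=
    (hνmom a).mul_prod (hνmom b)
  have hiba : Integrable (fun z : ℝ × ℝ => z.1 ^ b * z.2 ^ a) (ν.prod ν) :=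
    (hνmom b).mul_prod (hνmom a)
  have hi1 : Integrable (fun z : ℝ × ℝ => z.1 ^ (a + b)) (ν.prod ν) := by
    simpa using (hνmom (a + b)).mul_prod (integrable_const (1:ℝ))
  have hi2 : Integrable (fun z : ℝ × ℝ => z.2 ^ (a + b)) (ν.prod ν) := by
    simpa using (integrable_const (1:ℝ)).mul_prod (hνmom (a + b))
  have expand : ∀ z : ℝ × ℝ, (z.1 ^ a - z.2 ^ a) * (z.1 ^ b - z.2 ^ b)
      = z.1 ^ (a + b) + z.2 ^ (a + b) - (z.1 ^ a * z.2 ^ b + z.1 ^ b * z.2 ^ a) := by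
    intro z; rw [pow_add, pow_add]; ring
  have h3 : Integrable (fun z : ℝ × ℝ => z.1 ^ (a + b) + z.2 ^ (a + b)) (ν.prod ν) := hi1.add hi2
  have h4 : Integrable (fun z : ℝ × ℝ => z.1 ^ a * z.2 ^ b + z.1 ^ b * z.2 ^ a) (ν.prod ν) :=
    hiab.add hiba
  have A1 : ∫ z : ℝ × ℝ, z.1 ^ (a + b) ∂(ν.prod ν) = ∫ x, x ^ (a + b) ∂ν := by
    simpa using integral_prod_mul (μ := ν) (ν := ν) (f := fun x => x ^ (a + b))
      (g := fun _ => (1:ℝ))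
  have A2 : ∫ z : ℝ × ℝ, z.2 ^ (a + b) ∂(ν.prod ν) = ∫ x, x ^ (a + b) ∂ν := by
    simpa using integral_prod_mul (μ := ν) (ν := ν) (f := fun _ => (1:ℝ))
      (g := fun x => x ^ (a + b))
  rw [integral_congr_ae (Filter.Eventually.of_forall expand), integral_sub h3 h4,
    integral_add hi1 hi2, integral_add hiab hiba, A1, A2,
    integral_prod_mul (f := fun x => x ^ a) (g := fun x => x ^ b),
    integral_prod_mul (f := fun x => x ^ b) (g := fun x => x ^ a)] at key
  linarith

lemma sosh_mom_prod_le (hνsymm : ν.map (fun x => -x) = ν)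
    (hνmom : ∀ k : ℕ, Integrable (fun x => x ^ k) ν)
    {α : Type*} [DecidableEq α] (s : Finset α) (e : α → ℕ) :
    ∏ t ∈ s, ∫ x, x ^ e t ∂ν ≤ ∫ x, x ^ (∑ t ∈ s, e t) ∂ν := by
  by_cases hall : ∀ t ∈ s, Even (e t)
  · induction s using Finset.induction_on with
    | empty => simp
    | insert c s ha ih =>
      rw [Finset.prod_insert ha, Finset.sum_insert ha]
      have h1 : ∏ t ∈ s, ∫ x, x ^ e t ∂ν ≤ ∫ x, x ^ (∑ t ∈ s, e t) ∂ν :=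
        ih fun t ht => hall t (Finset.mem_insert_of_mem ht)
      have h2 : Even (∑ t ∈ s, e t) :=
        Finset.even_sum e fun t ht => hall t (Finset.mem_insert_of_mem ht)
      calc (∫ x, x ^ e c ∂ν) * ∏ t ∈ s, ∫ x, x ^ e t ∂ν
          ≤ (∫ x, x ^ e c ∂ν) * ∫ x, x ^ (∑ t ∈ s, e t) ∂ν :=
            mul_le_mul_of_nonneg_left h1 (sosh_mom_nonneg hνsymm _)
        _ ≤ ∫ x, x ^ (e c + ∑ t ∈ s, e t) ∂ν :=
            sosh_mom_mul_le hνmom (hall c (Finset.mem_insert_self c s)) h2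
  · push_neg at hall
    obtain ⟨t, ht, hodd⟩ := hall
    rw [Finset.prod_eq_zero ht (sosh_mom_odd hνsymm (Nat.not_even_iff_odd.mp hodd))]
    exact sosh_mom_nonneg hνsymm _

section Indep
variable {Ω : Type*} [MeasurableSpace Ω] {μ : Measure Ω} [IsProbabilityMeasure μ]

/-- Expectation of a product of independent integrable random variables. -/
lemma sosh_indep_prod {κ : Type*} [Fintype κ] (g : κ → Ω → ℝ)
    (hmeas : ∀ i, Measurable (g i)) (hint : ∀ i, Integrable (g i) μ)
    (hindep : iIndepFun g μ) (s : Finset κ) :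
    Integrable (fun ω => ∏ i ∈ s, g i ω) μ ∧
      ∫ ω, ∏ i ∈ s, g i ω ∂μ = ∏ i ∈ s, ∫ ω, g i ω ∂μ := by
  classical
  induction s using Finset.induction_on with
  | empty => simp
  | insert c s ha ih =>
    have hIndep : IndepFun (∏ j ∈ s, g j) (g c) μ :=
      hindep.indepFun_finsetProd_of_notMem hmeas ha
    have hps : Integrable (fun ω => ∏ i ∈ s, g i ω) μ := ih.1
    have hps' : Integrable (∏ j ∈ s, g j) μ := by
      have : (∏ j ∈ s, g j) = fun ω => ∏ i ∈ s, g i ω := by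
        funext ω; simp [Finset.prod_apply]
      rw [this]; exact hps
    have hmul : Integrable ((∏ j ∈ s, g j) * g c) μ := hIndep.integrable_mul hps' (hint c)
    have hint1 : Integrable (fun ω => ∏ i ∈ insert c s, g i ω) μ := by
      have : (fun ω => ∏ i ∈ insert c s, g i ω) = (∏ j ∈ s, g j) * g c := by
        funext ω; simp [Finset.prod_insert ha, Finset.prod_apply, mul_comm]
      rw [this]; exact hmul
    refine ⟨hint1, ?_⟩
    have hI : ∫ ω, ((∏ j ∈ s, g j) * g c) ω ∂μ
        = (∫ ω, (∏ j ∈ s, g j) ω ∂μ) * ∫ ω, g c ω ∂μ :=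
      hIndep.integral_mul_eq_mul_integral hps'.aestronglyMeasurable (hint c).aestronglyMeasurable
    have e1 : ∫ ω, ∏ i ∈ insert c s, g i ω ∂μ = ∫ ω, ((∏ j ∈ s, g j) * g c) ω ∂μ := by
      refine integral_congr_ae (Filter.Eventually.of_forall fun ω => ?_)
      simp [Finset.prod_insert ha, Finset.prod_apply, mul_comm]
    have e2 : ∫ ω, (∏ j ∈ s, g j) ω ∂μ = ∏ i ∈ s, ∫ ω, g i ω ∂μ := by
      rw [← ih.2]
      refine integral_congr_ae (Filter.Eventually.of_forall fun ω => ?_)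
      simp [Finset.prod_apply]
    rw [e1, hI, e2, Finset.prod_insert ha, mul_comm]

/-- Expectation of a product of powers of iid random variables with law `ν`. -/
lemma sosh_indep_prod_pow {κ : Type*} [Fintype κ] {ν : Measure ℝ}
    (hνmom : ∀ k : ℕ, Integrable (fun x => x ^ k) ν)
    (g : κ → Ω → ℝ) (hmeas : ∀ i, Measurable (g i))
    (hlaw : ∀ i, μ.map (g i) = ν)
    (hindep : iIndepFun g μ) (e : κ → ℕ) :
    Integrable (fun ω => ∏ i, g i ω ^ e i) μ ∧
      ∫ ω, ∏ i, g i ω ^ e i ∂μ = ∏ i, ∫ x, x ^ e i ∂ν := by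
  have hmeas' : ∀ i, Measurable (fun ω => g i ω ^ e i) :=
    fun i => (hmeas i).pow_const (e i)
  have hint : ∀ i, Integrable (fun ω => g i ω ^ e i) μ := by
    intro i
    have := (hνmom (e i))
    rw [← hlaw i] at this
    exact (integrable_map_measure this.aestronglyMeasurable (hmeas i).aemeasurable).mp this
  have hindep' : iIndepFun (fun i ω => g i ω ^ e i) μ :=
    hindep.comp (fun i x => x ^ e i) fun i => measurable_id.pow_const (e i)
  obtain ⟨h1, h2⟩ := sosh_indep_prod (fun i ω => g i ω ^ e i) hmeas' hint hindep' Finset.univ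
  refine ⟨h1, h2.trans ?_⟩
  refine Finset.prod_congr rfl fun i _ => ?_
  rw [← hlaw i, integral_map (hmeas i).aemeasurable (by fun_prop)]

end Indep

section Regroup

lemma sosh_prod_comp_pow {T κ : Type*} [Fintype T] [Fintype κ] [DecidableEq κ]
    (g : T → κ) (F : κ → ℝ) :
    ∏ t, F (g t) = ∏ w, F w ^ (Finset.univ.filter (fun t => g t = w)).card := by
  classical
  rw [← Finset.prod_fiberwise_of_maps_to (t := Finset.univ)
    (fun t _ => Finset.mem_univ (g t)) (fun t => F (g t))]
  refine Finset.prod_congr rfl fun w _ => ?_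
  rw [Finset.prod_congr rfl (fun t ht => ?_), Finset.prod_const]
  exact congrArg F (Finset.mem_filter.mp ht).2

lemma sosh_card_fiber_comp {T κ1 κ2 : Type*} [Fintype T] [Fintype κ1]
    [DecidableEq κ1] [DecidableEq κ2] (g : T → κ1) (φ : κ1 → κ2) (q : κ2) :
    (Finset.univ.filter (fun t => φ (g t) = q)).card
      = ∑ w ∈ Finset.univ.filter (fun w => φ w = q),
          (Finset.univ.filter (fun t => g t = w)).card := by
  classical
  rw [Finset.card_eq_sum_card_fiberwise
    (f := g) (t := Finset.univ.filter (fun w => φ w = q))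
    (fun t ht => by simpa using (Finset.mem_filter.mp ht).2)]
  refine Finset.sum_congr rfl fun w hw => ?_
  congr 1
  ext t
  simp only [Finset.mem_filter, Finset.mem_univ, true_and]
  have hw' := (Finset.mem_filter.mp hw).2
  constructor
  · rintro ⟨-, h⟩; exact h
  · intro h; exact ⟨by rw [h]; exact hw', h⟩

end Regroup

section Trace
variable {ι : Type*} [Fintype ι] [DecidableEq ι]

lemma sosh_cons_snoc_castSucc {m : ℕ} (i x : ι) (d : Fin m → ι) (k : Fin (m + 1)) :
    (Fin.cons i (Fin.snoc d x) : Fin (m + 2) → ι) k.castSucc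
      = (Fin.cons i d : Fin (m + 1) → ι) k := by
  induction k using Fin.cases with
  | zero => simp
  | succ j => rw [← Fin.succ_castSucc, Fin.cons_succ, Fin.cons_succ, Fin.snoc_castSucc]

lemma sosh_pow_apply (P : Matrix ι ι ℝ) :
    ∀ (m : ℕ) (i j : ι), (P ^ m) i j =
      ∑ d : Fin m → ι, if (Fin.cons i d : Fin (m + 1) → ι) (Fin.last m) = j
        then ∏ k : Fin m, P ((Fin.cons i d : Fin (m + 1) → ι) k.castSucc) (d k) else 0 := by
  intro m
  induction m with
  | zero =>
    intro i j
    rw [pow_zero]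
    simp [Matrix.one_apply]
  | succ m IH =>
    intro i j
    rw [pow_succ, Matrix.mul_apply]
    have LHS : ∀ x : ι, (P ^ m) i x * P x j
        = ∑ d : Fin m → ι, if (Fin.cons i d : Fin (m + 1) → ι) (Fin.last m) = x
            then (∏ k : Fin m, P ((Fin.cons i d : Fin (m + 1) → ι) k.castSucc) (d k)) * P x j
            else 0 := by
      intro x
      rw [IH, Finset.sum_mul]
      refine Finset.sum_congr rfl fun d _ => ?_
      rw [ite_mul, zero_mul]
    simp only [LHS]
    rw [Finset.sum_comm]
    -- collapse inner sum over x
    have L2 : ∀ d : Fin m → ι,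
        (∑ x : ι, if (Fin.cons i d : Fin (m + 1) → ι) (Fin.last m) = x
            then (∏ k : Fin m, P ((Fin.cons i d : Fin (m + 1) → ι) k.castSucc) (d k)) * P x j
            else 0)
        = (∏ k : Fin m, P ((Fin.cons i d : Fin (m + 1) → ι) k.castSucc) (d k))
            * P ((Fin.cons i d : Fin (m + 1) → ι) (Fin.last m)) j := by
      intro d
      rw [Finset.sum_ite_eq Finset.univ ((Fin.cons i d : Fin (m + 1) → ι) (Fin.last m))
        (fun x => (∏ k : Fin m, P ((Fin.cons i d : Fin (m + 1) → ι) k.castSucc) (d k)) * P x j)]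
      simp
    simp only [L2]
    -- now the RHS side: reindex by snoc
    let e : ((Fin m → ι) × ι) ≃ (Fin (m + 1) → ι) :=
      { toFun := fun p => Fin.snoc p.1 p.2
        invFun := fun d' => (fun k => d' k.castSucc, d' (Fin.last m))
        left_inv := by rintro ⟨d, x⟩; simp
        right_inv := by
          intro d'; funext k
          induction k using Fin.lastCases with
          | last => simp
          | cast k => simp }
    rw [← e.sum_comp (fun d' : Fin (m + 1) → ι =>
      if (Fin.cons i d' : Fin (m + 2) → ι) (Fin.last (m + 1)) = j
        then ∏ k : Fin (m + 1), P ((Fin.cons i d' : Fin (m + 2) → ι) k.castSucc) (d' k) else 0)]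
    rw [Fintype.sum_prod_type]
    refine Finset.sum_congr rfl fun d _ => ?_
    have EQ : ∀ x : ι,
        (if (Fin.cons i (Fin.snoc d x) : Fin (m + 2) → ι) (Fin.last (m + 1)) = j
          then ∏ k : Fin (m + 1),
            P ((Fin.cons i (Fin.snoc d x) : Fin (m + 2) → ι) k.castSucc) ((Fin.snoc d x : Fin (m+1) → ι) k) else 0)
        = if x = j
            then (∏ k : Fin m, P ((Fin.cons i d : Fin (m + 1) → ι) k.castSucc) (d k))
              * P ((Fin.cons i d : Fin (m + 1) → ι) (Fin.last m)) x
            else 0 := by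
      intro x
      have hc : (Fin.cons i (Fin.snoc d x) : Fin (m + 2) → ι) (Fin.last (m + 1)) = x := by
        rw [show (Fin.last (m + 1)) = (Fin.last m).succ from rfl, Fin.cons_succ, Fin.snoc_last]
      have hpr : (∏ k : Fin (m + 1),
            P ((Fin.cons i (Fin.snoc d x) : Fin (m + 2) → ι) k.castSucc) ((Fin.snoc d x : Fin (m+1) → ι) k))
          = (∏ k : Fin m, P ((Fin.cons i d : Fin (m + 1) → ι) k.castSucc) (d k))
              * P ((Fin.cons i d : Fin (m + 1) → ι) (Fin.last m)) x := by
        rw [Fin.prod_univ_castSucc]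
        congr 1
        · refine Finset.prod_congr rfl fun k _ => ?_
          rw [sosh_cons_snoc_castSucc, Fin.snoc_castSucc]
        · rw [sosh_cons_snoc_castSucc, Fin.snoc_last]
      rw [hc, hpr]
    simp only [e, Equiv.coe_fn_mk, EQ]
    rw [Finset.sum_ite_eq' Finset.univ j]
    simp
end Trace

section Trace2
variable {ι : Type*} [Fintype ι] [DecidableEq ι]

lemma sosh_fin_val_add_one {m : ℕ} [NeZero m] (k : Fin m) :
    ((k + 1 : Fin m) : ℕ) = if (k : ℕ) + 1 = m then 0 else (k : ℕ) + 1 := by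
  have hm : 0 < m := Nat.pos_of_ne_zero (NeZero.ne m)
  have hk := k.isLt
  rw [Fin.val_add, Fin.val_one']
  by_cases h : (k : ℕ) + 1 = m
  · rw [if_pos h]
    by_cases hm1 : m = 1
    · subst hm1; omega
    · rw [show (1 : ℕ) % m = 1 from Nat.mod_eq_of_lt (by omega), h, Nat.mod_self]
  · rw [if_neg h, show (1 : ℕ) % m = 1 from Nat.mod_eq_of_lt (by omega),
      Nat.mod_eq_of_lt (by omega)]

omit [Fintype ι] [DecidableEq ι] in
lemma sosh_next_eq {m : ℕ} [NeZero m] (i : ι) (d : Fin m → ι)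
    (hc : (Fin.cons i d : Fin (m + 1) → ι) (Fin.last m) = i) (k : Fin m) :
    (Fin.cons i d : Fin (m + 1) → ι) (Fin.castSucc (k + 1)) = d k := by
  have hm : 0 < m := Nat.pos_of_ne_zero (NeZero.ne m)
  have hk := k.isLt
  by_cases h : (k : ℕ) + 1 < m
  · have h1 : Fin.castSucc (k + 1) = Fin.succ ⟨(k : ℕ), k.isLt⟩ := by
      ext
      simp only [Fin.coe_castSucc, Fin.val_succ, sosh_fin_val_add_one]
      rw [if_neg (by omega)]
    rw [h1, Fin.cons_succ]
  · have h0 : (k + 1 : Fin m) = 0 := by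
      ext
      simp only [sosh_fin_val_add_one, Fin.val_zero]
      rw [if_pos (by omega)]
    rw [h0, show Fin.castSucc (0 : Fin m) = 0 from rfl, Fin.cons_zero]
    have hl : Fin.last m = Fin.succ ⟨m - 1, by omega⟩ := by ext; simp; omega
    rw [hl, Fin.cons_succ] at hc
    have hkk : (⟨m - 1, by omega⟩ : Fin m) = k := by ext; simp; omega
    rw [hkk] at hc
    exact hc.symm

lemma sosh_trace_pow (P : Matrix ι ι ℝ) {m : ℕ} [NeZero m] :
    (P ^ m).trace = ∑ e : Fin m → ι, ∏ k : Fin m, P (e k) (e (k + 1)) := by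
  have hm : 0 < m := Nat.pos_of_ne_zero (NeZero.ne m)
  rw [Matrix.trace]
  simp only [Matrix.diag_apply, sosh_pow_apply]
  rw [← Fintype.sum_prod_type']
  rw [← Finset.sum_filter]
  refine Finset.sum_nbij'
    (i := fun p : ι × (Fin m → ι) => fun k : Fin m =>
      (Fin.cons p.1 p.2 : Fin (m + 1) → ι) k.castSucc)
    (j := fun e : Fin m → ι => (e 0, fun k : Fin m => e (k + 1)))
    (fun p _ => Finset.mem_univ _) ?_ ?_ ?_ ?_
  · -- hj : membership in filter
    intro e _
    simp only [Finset.mem_filter, Finset.mem_univ, true_and]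
    have hl : Fin.last m = Fin.succ ⟨m - 1, by omega⟩ := by ext; simp; omega
    rw [hl, Fin.cons_succ]
    have h0 : ((⟨m - 1, by omega⟩ : Fin m) + 1) = 0 := by
      ext
      simp only [sosh_fin_val_add_one, Fin.val_zero]
      rw [if_pos (by omega)]
    rw [h0]
  · -- left_inv
    intro p hp
    have hc := (Finset.mem_filter.mp hp).2
    dsimp only
    have hfun : (fun k : Fin m => (Fin.cons p.1 p.2 : Fin (m + 1) → ι) (Fin.castSucc (k + 1)))
        = p.2 := funext fun k => sosh_next_eq p.1 p.2 hc k
    rw [Prod.ext_iff]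
    exact ⟨by simp, hfun⟩
  · -- right_inv
    intro e _
    dsimp only
    funext k
    by_cases hk0 : k = 0
    · subst hk0; simp
    · have hkpos : 0 < (k : ℕ) := by
        rcases Nat.eq_zero_or_pos (k : ℕ) with h | h
        · exact absurd (Fin.ext h) hk0
        · exact h
      have hk := k.isLt
      have h1 : Fin.castSucc k = Fin.succ ⟨(k : ℕ) - 1, by omega⟩ := by
        ext; simp; omega
      rw [h1, Fin.cons_succ]
      congr 1
      ext
      simp only [sosh_fin_val_add_one, Fin.val_mk]
      rw [if_neg (by omega)]
      omega
  · -- values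
    intro p hp
    have hc := (Finset.mem_filter.mp hp).2
    refine Finset.prod_congr rfl fun k _ => ?_
    dsimp only
    rw [sosh_next_eq p.1 p.2 hc k]
end Trace2

def soshEdge {n : ℕ} (u v : Fin n) : {q : Fin n × Fin n // q.1 ≤ q.2} :=
  if h : u ≤ v then ⟨(u, v), h⟩ else ⟨(v, u), le_of_not_ge h⟩

lemma soshEdge_comm {n : ℕ} (u v : Fin n) : soshEdge u v = soshEdge v u := by
  unfold soshEdge
  rcases le_or_gt u v with h | h
  · rcases eq_or_lt_of_le h with rfl | h'
    · simp
    · rw [dif_pos h, dif_neg (not_le.mpr h')]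
  · rw [dif_neg (not_le.mpr h), dif_pos h.le]

/-- count of steps hitting a given value -/
def soshCnt {κ : Type*} [DecidableEq κ] {m : ℕ} (g : Fin m → κ) (w : κ) : ℕ :=
  (Finset.univ.filter (fun k => g k = w)).card

def soshPhi {n p : ℕ} (hpn : p ≤ n) (w : Fin n × Fin p) : {q : Fin n × Fin n // q.1 ≤ q.2} :=
  soshEdge w.1 (Fin.castLE hpn w.2)

def soshN1 {n p m : ℕ} [NeZero m] (c : Fin m → Fin n) (d : Fin m → Fin p)
    (w : Fin n × Fin p) : ℕ :=
  soshCnt (fun k => (c k, d k)) w + soshCnt (fun k => (c k, d (k + 1))) w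

def soshN2 {n m : ℕ} [NeZero m] (c d : Fin m → Fin n)
    (q : {q : Fin n × Fin n // q.1 ≤ q.2}) : ℕ :=
  soshCnt (fun k => soshEdge (d k) (c k)) q + soshCnt (fun k => soshEdge (c k) (d (k + 1))) q

lemma soshN2_eq {n p m : ℕ} [NeZero m] (hpn : p ≤ n) (c : Fin m → Fin n) (d : Fin m → Fin p)
    (q : {q : Fin n × Fin n // q.1 ≤ q.2}) :
    soshN2 c (fun k => Fin.castLE hpn (d k)) q
      = ∑ w ∈ Finset.univ.filter (fun w => soshPhi hpn w = q), soshN1 c d w := by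
  unfold soshN2 soshN1
  rw [Finset.sum_add_distrib]
  congr 1
  · have h1 : (fun k : Fin m => soshEdge (Fin.castLE hpn (d k)) (c k))
        = fun k => soshPhi hpn (c k, d k) := by
      funext k; exact soshEdge_comm _ _
    rw [show soshCnt (fun k : Fin m => soshEdge (Fin.castLE hpn (d k)) (c k)) q
        = soshCnt (fun k : Fin m => soshPhi hpn (c k, d k)) q from by rw [h1]]
    exact sosh_card_fiber_comp (fun k => (c k, d k)) (soshPhi hpn) q
  · exact sosh_card_fiber_comp (fun k => (c k, d (k + 1))) (soshPhi hpn) q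


/-- **Inequality (3.3)** of Soshnikov.  Let `x_{ij}` be i.i.d. real random variables
with a common symmetric law `ν` having all moments finite, `X` the `n×p` matrix with
entries `x_{ij}` (`p ≤ n`), and `A_p = Xᵀ X`.  Let `M_n` be an `n×n` real symmetric
Wigner matrix whose entries on and above the diagonal are i.i.d. with the same law `ν`.
Then `E[Trace A_p^m] ≤ E[Trace M_n^{2m}]` for every positive integer `m`. -/
theorem trace_power_cov_le_trace_power_wigner
    {ΩX ΩM : Type*} [MeasurableSpace ΩX] [MeasurableSpace ΩM]
    (μX : Measure ΩX) (hμX : IsProbabilityMeasure μX)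
    (μM : Measure ΩM) (hμM : IsProbabilityMeasure μM)
    (ν : Measure ℝ) (hν : IsProbabilityMeasure ν)
    -- the common law is symmetric
    (hνsymm : ν.map (fun x => -x) = ν)
    -- all moments of the common law are finite
    (hνmom : ∀ k : ℕ, Integrable (fun x => x ^ k) ν)
    (n p : ℕ) (hpn : p ≤ n)
    (X : ΩX → Matrix (Fin n) (Fin p) ℝ)
    (hXmeas : ∀ i j, Measurable fun ω => X ω i j)
    -- the entries of `X` are independent with common law `ν`
    (hXlaw : ∀ i j, Measure.map (fun ω => X ω i j) μX = ν)
    (hXindep : iIndepFun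
      (fun (ij : Fin n × Fin p) ω => X ω ij.1 ij.2) μX)
    (M : ΩM → Matrix (Fin n) (Fin n) ℝ)
    -- `M` is symmetric: `y_{ji} = y_{ij}`
    (hMsymm : ∀ ω, (M ω).IsSymm)
    (hMmeas : ∀ i j, Measurable fun ω => M ω i j)
    -- the entries of `M` on and above the diagonal are independent with common law `ν`
    (hMlaw : ∀ i j, Measure.map (fun ω => M ω i j) μM = ν)
    (hMindep : iIndepFun
      (fun (q : {q : Fin n × Fin n // q.1 ≤ q.2}) ω => M ω q.1.1 q.1.2) μM)
    (m : ℕ) (hm : 0 < m) :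
    ∫ ω, (((X ω)ᵀ * X ω) ^ m).trace ∂ μX ≤ ∫ ω, ((M ω) ^ (2 * m)).trace ∂ μM := by
  classical
  haveI : NeZero m := ⟨hm.ne'⟩
  -- X side, per path
  have keyX : ∀ (c : Fin m → Fin n) (d : Fin m → Fin p),
      Integrable (fun ω => ∏ k : Fin m, (X ω (c k) (d k) * X ω (c k) (d (k + 1)))) μX ∧
      ∫ ω, ∏ k : Fin m, (X ω (c k) (d k) * X ω (c k) (d (k + 1))) ∂μX
        = ∏ w : Fin n × Fin p, ∫ x, x ^ (soshN1 c d w) ∂ν := by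
    intro c d
    have hre : ∀ ω, ∏ k : Fin m, (X ω (c k) (d k) * X ω (c k) (d (k + 1)))
        = ∏ w : Fin n × Fin p, (X ω w.1 w.2) ^ (soshN1 c d w) := by
      intro ω
      rw [Finset.prod_mul_distrib]
      have h1 : ∏ k : Fin m, X ω (c k) (d k)
          = ∏ w : Fin n × Fin p, (X ω w.1 w.2) ^ soshCnt (fun k => (c k, d k)) w :=
        sosh_prod_comp_pow (fun k => (c k, d k)) (fun w => X ω w.1 w.2)
      have h2 : ∏ k : Fin m, X ω (c k) (d (k + 1))
          = ∏ w : Fin n × Fin p, (X ω w.1 w.2) ^ soshCnt (fun k => (c k, d (k + 1))) w :=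
        sosh_prod_comp_pow (fun k => (c k, d (k + 1))) (fun w => X ω w.1 w.2)
      rw [h1, h2, ← Finset.prod_mul_distrib]
      exact Finset.prod_congr rfl fun w _ => (pow_add _ _ _).symm
    obtain ⟨hint, hval⟩ := sosh_indep_prod_pow (μ := μX) hνmom (fun w ω => X ω w.1 w.2)
      (fun w => hXmeas w.1 w.2) (fun w => hXlaw w.1 w.2) hXindep (soshN1 c d)
    refine ⟨hint.congr (Filter.Eventually.of_forall fun ω => (hre ω).symm), ?_⟩
    rw [integral_congr_ae (Filter.Eventually.of_forall hre)]
    exact hval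
  -- M side, per path
  have hMedge : ∀ ω (u v : Fin n), M ω u v = M ω (soshEdge u v).1.1 (soshEdge u v).1.2 := by
    intro ω u v
    unfold soshEdge
    split
    · rfl
    · exact ((hMsymm ω).apply u v).symm
  have keyM : ∀ (c d : Fin m → Fin n),
      Integrable (fun ω => ∏ k : Fin m, (M ω (d k) (c k) * M ω (c k) (d (k + 1)))) μM ∧
      ∫ ω, ∏ k : Fin m, (M ω (d k) (c k) * M ω (c k) (d (k + 1))) ∂μM
        = ∏ q : {q : Fin n × Fin n // q.1 ≤ q.2}, ∫ x, x ^ (soshN2 c d q) ∂ν := by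
    intro c d
    have hre : ∀ ω, ∏ k : Fin m, (M ω (d k) (c k) * M ω (c k) (d (k + 1)))
        = ∏ q : {q : Fin n × Fin n // q.1 ≤ q.2}, (M ω q.1.1 q.1.2) ^ (soshN2 c d q) := by
      intro ω
      rw [Finset.prod_mul_distrib]
      have h1 : ∏ k : Fin m, M ω (d k) (c k)
          = ∏ q : {q : Fin n × Fin n // q.1 ≤ q.2},
              (M ω q.1.1 q.1.2) ^ soshCnt (fun k => soshEdge (d k) (c k)) q :=
        (Finset.prod_congr rfl fun k _ => hMedge ω (d k) (c k)).trans
          (sosh_prod_comp_pow (fun k => soshEdge (d k) (c k)) (fun q => M ω q.1.1 q.1.2))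
      have h2 : ∏ k : Fin m, M ω (c k) (d (k + 1))
          = ∏ q : {q : Fin n × Fin n // q.1 ≤ q.2},
              (M ω q.1.1 q.1.2) ^ soshCnt (fun k => soshEdge (c k) (d (k + 1))) q :=
        (Finset.prod_congr rfl fun k _ => hMedge ω (c k) (d (k + 1))).trans
          (sosh_prod_comp_pow (fun k => soshEdge (c k) (d (k + 1))) (fun q => M ω q.1.1 q.1.2))
      rw [h1, h2, ← Finset.prod_mul_distrib]
      exact Finset.prod_congr rfl fun q _ => (pow_add _ _ _).symm
    obtain ⟨hint, hval⟩ := sosh_indep_prod_pow (μ := μM) hνmom (fun q ω => M ω q.1.1 q.1.2)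
      (fun q => hMmeas _ _) (fun q => hMlaw _ _) hMindep (soshN2 c d)
    refine ⟨hint.congr (Filter.Eventually.of_forall fun ω => (hre ω).symm), ?_⟩
    rw [integral_congr_ae (Filter.Eventually.of_forall hre)]
    exact hval
  -- nonnegativity of each M-path expectation
  have hMnonneg : ∀ (c d : Fin m → Fin n),
      0 ≤ ∫ ω, ∏ k : Fin m, (M ω (d k) (c k) * M ω (c k) (d (k + 1))) ∂μM := by
    intro c d
    rw [(keyM c d).2]
    exact Finset.prod_nonneg fun q _ => sosh_mom_nonneg hνsymm _
  -- per-path comparison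
  have hstep : ∀ (c : Fin m → Fin n) (d : Fin m → Fin p),
      ∫ ω, ∏ k : Fin m, (X ω (c k) (d k) * X ω (c k) (d (k + 1))) ∂μX
        ≤ ∫ ω, ∏ k : Fin m, (M ω (Fin.castLE hpn (d k)) (c k)
            * M ω (c k) (Fin.castLE hpn (d (k + 1)))) ∂μM := by
    intro c d
    have h2 := keyM c (fun k => Fin.castLE hpn (d k))
    rw [(keyX c d).2, h2.2]
    calc ∏ w : Fin n × Fin p, ∫ x, x ^ (soshN1 c d w) ∂ν
        = ∏ q : {q : Fin n × Fin n // q.1 ≤ q.2},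
            ∏ w ∈ Finset.univ.filter (fun w => soshPhi hpn w = q), ∫ x, x ^ (soshN1 c d w) ∂ν :=
          (Finset.prod_fiberwise_of_maps_to (fun w _ => Finset.mem_univ (soshPhi hpn w))
            (fun w => ∫ x, x ^ (soshN1 c d w) ∂ν)).symm
      _ ≤ ∏ q : {q : Fin n × Fin n // q.1 ≤ q.2},
            ∫ x, x ^ (soshN2 c (fun k => Fin.castLE hpn (d k)) q) ∂ν := by
          refine Finset.prod_le_prod (fun q _ => Finset.prod_nonneg
            fun w _ => sosh_mom_nonneg hνsymm _) (fun q _ => ?_)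
          rw [soshN2_eq hpn c d q]
          exact sosh_mom_prod_le hνsymm hνmom _ _
  -- trace expansions
  have hXtr : ∀ ω, (((X ω)ᵀ * X ω) ^ m).trace
      = ∑ d : Fin m → Fin p, ∑ c : Fin m → Fin n,
          ∏ k : Fin m, (X ω (c k) (d k) * X ω (c k) (d (k + 1))) := by
    intro ω
    rw [sosh_trace_pow]
    refine Finset.sum_congr rfl fun d _ => ?_
    have h1 : ∀ k : Fin m, ((X ω)ᵀ * X ω) (d k) (d (k + 1))
        = ∑ i : Fin n, X ω i (d k) * X ω i (d (k + 1)) := by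
      intro k
      rw [Matrix.mul_apply]
      exact Finset.sum_congr rfl fun i _ => by rw [Matrix.transpose_apply]
    rw [Finset.prod_congr rfl fun k _ => h1 k, Finset.prod_univ_sum, Fintype.piFinset_univ]
  have hMtr : ∀ ω, ((M ω) ^ (2 * m)).trace
      = ∑ d : Fin m → Fin n, ∑ c : Fin m → Fin n,
          ∏ k : Fin m, (M ω (d k) (c k) * M ω (c k) (d (k + 1))) := by
    intro ω
    rw [pow_mul, sosh_trace_pow]
    refine Finset.sum_congr rfl fun d _ => ?_
    have h1 : ∀ k : Fin m, ((M ω) ^ 2) (d k) (d (k + 1))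
        = ∑ i : Fin n, M ω (d k) i * M ω i (d (k + 1)) := by
      intro k
      rw [pow_two, Matrix.mul_apply]
    rw [Finset.prod_congr rfl fun k _ => h1 k, Finset.prod_univ_sum, Fintype.piFinset_univ]
  calc ∫ ω, (((X ω)ᵀ * X ω) ^ m).trace ∂ μX
      = ∑ d : Fin m → Fin p, ∑ c : Fin m → Fin n,
          ∫ ω, ∏ k : Fin m, (X ω (c k) (d k) * X ω (c k) (d (k + 1))) ∂μX := by
        rw [integral_congr_ae (Filter.Eventually.of_forall hXtr),
          integral_finset_sum _ (fun d _ => integrable_finset_sum _ fun c _ => (keyX c d).1)]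
        exact Finset.sum_congr rfl fun d _ => integral_finset_sum _ fun c _ => (keyX c d).1
    _ ≤ ∑ d : Fin m → Fin p, ∑ c : Fin m → Fin n,
          ∫ ω, ∏ k : Fin m, (M ω (Fin.castLE hpn (d k)) (c k)
            * M ω (c k) (Fin.castLE hpn (d (k + 1)))) ∂μM :=
        Finset.sum_le_sum fun d _ => Finset.sum_le_sum fun c _ => hstep c d
    _ ≤ ∑ d : Fin m → Fin n, ∑ c : Fin m → Fin n,
          ∫ ω, ∏ k : Fin m, (M ω (d k) (c k) * M ω (c k) (d (k + 1))) ∂μM := by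
        have hinj : ∀ d1 ∈ (Finset.univ : Finset (Fin m → Fin p)),
            ∀ d2 ∈ (Finset.univ : Finset (Fin m → Fin p)),
            (fun k => Fin.castLE hpn (d1 k)) = (fun k => Fin.castLE hpn (d2 k)) → d1 = d2 := by
          intro d1 _ d2 _ h
          funext k
          exact Fin.castLE_injective hpn (congrFun h k)
        have himg : ∑ d : Fin m → Fin p, ∑ c : Fin m → Fin n,
              ∫ ω, ∏ k : Fin m, (M ω (Fin.castLE hpn (d k)) (c k)
                * M ω (c k) (Fin.castLE hpn (d (k + 1)))) ∂μM
            = ∑ d' ∈ Finset.univ.image (fun d : Fin m → Fin p => fun k => Fin.castLE hpn (d k)),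
                ∑ c : Fin m → Fin n,
                  ∫ ω, ∏ k : Fin m, (M ω (d' k) (c k) * M ω (c k) (d' (k + 1))) ∂μM :=
          (Finset.sum_image (f := fun d' : Fin m → Fin n => ∑ c : Fin m → Fin n,
            ∫ ω, ∏ k : Fin m, (M ω (d' k) (c k) * M ω (c k) (d' (k + 1))) ∂μM) hinj).symm
        rw [himg]
        refine Finset.sum_le_sum_of_subset_of_nonneg (Finset.subset_univ _) ?_
        intro d' _ _
        exact Finset.sum_nonneg fun c _ => hMnonneg c d'
    _ = ∫ ω, ((M ω) ^ (2 * m)).trace ∂ μM := by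
        rw [integral_congr_ae (Filter.Eventually.of_forall hMtr),
          integral_finset_sum _ (fun d _ => integrable_finset_sum _ fun c _ => (keyM c d).1)]
        exact (Finset.sum_congr rfl fun d _ =>
          integral_finset_sum _ fun c _ => (keyM c d).1).symm
end Moments
end

section
/- Let y ≥ 1 and let z be a real number with 0 < z < 1/(√y + 1)². Then the series Σ_{m≥0} g_m(y)·z^m converges and its sum equals (−y·z + z + 1 − √(((y−1)·z − 1)² − 4z)) / (2z), where the expression under the square root is nonnegative for such z. -/
open Finset

/-- The height after `t` steps of the walk encoded by the step sequence `s`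
(`true` = up-step `+1`, `false` = down-step `−1`). -/
def dyckHeight (m : ℕ) (s : Fin (2 * m) → Bool) (t : ℕ) : ℤ :=
  ∑ u ∈ Finset.univ.filter (fun u : Fin (2 * m) => (u : ℕ) < t),
    (if s u then (1 : ℤ) else -1)

/-- `s` encodes a Dyck path of length `2m`: the walk `x(t) = dyckHeight m s t` satisfies
`x(0) = 0`, `x(t) ≥ 0` for all `0 ≤ t ≤ 2m`, `x(2m) = 0`, and `|x(t+1) − x(t)| = 1`. -/
def IsDyck (m : ℕ) (s : Fin (2 * m) → Bool) : Prop :=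
  (∀ t : ℕ, t ≤ 2 * m → 0 ≤ dyckHeight m s t) ∧ dyckHeight m s (2 * m) = 0

/-- `#(X)`: the number of up-steps at even times of the path encoded by `s`. -/
def upEven (m : ℕ) (s : Fin (2 * m) → Bool) : ℕ :=
  (Finset.univ.filter (fun u : Fin (2 * m) => (u : ℕ) % 2 = 0 ∧ s u = true)).card

/-- `#'(X)`: the number of up-steps at odd times of the path encoded by `s`. -/
def upOdd (m : ℕ) (s : Fin (2 * m) → Bool) : ℕ :=
  (Finset.univ.filter (fun u : Fin (2 * m) => (u : ℕ) % 2 = 1 ∧ s u = true)).card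

open Classical in
/-- `g_m(y) = Σ_{X ∈ Ω_m} y^{#(X)}`, the generating polynomial of Dyck paths of length
`2m` by the number of up-steps at even times; `g_0(y) = 1`. -/
noncomputable def dyckG (m : ℕ) (y : ℝ) : ℝ :=
  ∑ s : Fin (2 * m) → Bool, if IsDyck m s then y ^ upEven m s else 0

open Classical in
/-- `g'_m(y) = Σ_{X ∈ Ω_m} y^{#'(X)}`, the generating polynomial of Dyck paths of length
`2m` by the number of up-steps at odd times; `g'_0(y) = 1`. -/
noncomputable def dyckG' (m : ℕ) (y : ℝ) : ℝ :=
  ∑ s : Fin (2 * m) → Bool, if IsDyck m s then y ^ upOdd m s else 0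


namespace DyckAux


/-- signed balance of a boolean list -/
def bal : List Bool → ℤ
  | [] => 0
  | a :: l => (if a then 1 else -1) + bal l

@[simp] lemma bal_nil : bal [] = 0 := rfl
@[simp] lemma bal_cons (a : Bool) (l : List Bool) :
    bal (a :: l) = (if a then 1 else -1) + bal l := rfl

lemma bal_append (l r : List Bool) : bal (l ++ r) = bal l + bal r := by
  induction l with
  | nil => simp
  | cons a l ih => simp [ih]; ring

/-- `cnt true l` counts entries `true` at even positions, `cnt false l` counts
entries `true` at odd positions. -/
def cnt : Bool → List Bool → ℕ
  | _, [] => 0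
  | b, a :: l => (if b ∧ a then 1 else 0) + cnt (!b) l

@[simp] lemma cnt_nil (b : Bool) : cnt b [] = 0 := rfl
@[simp] lemma cnt_cons (b a : Bool) (l : List Bool) :
    cnt b (a :: l) = (if b ∧ a then 1 else 0) + cnt (!b) l := rfl

lemma cnt_append (b : Bool) (l r : List Bool) :
    cnt b (l ++ r) = cnt b l + cnt (if l.length % 2 = 0 then b else !b) r := by
  induction l generalizing b with
  | nil => simp
  | cons a l ih =>
    simp only [List.cons_append, cnt_cons, List.length_cons, ih (!b)]
    rcases Nat.even_or_odd l.length with h | h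
    · have h0 : l.length % 2 = 0 := Nat.even_iff.mp h
      have h1 : (l.length + 1) % 2 = 1 := by omega
      simp [h0, h1]
      ring
    · have h0 : l.length % 2 = 1 := Nat.odd_iff.mp h
      have h1 : (l.length + 1) % 2 = 0 := by omega
      simp [h0, h1]
      ring

lemma bal_eq_counts (l : List Bool) :
    bal l = (l.count true : ℤ) - (l.count false : ℤ) := by
  induction l with
  | nil => simp
  | cons a l ih =>
    cases a <;> simp [List.count_cons, ih] <;> ring

lemma length_eq_counts (l : List Bool) :
    l.length = l.count true + l.count false := by
  induction l with
  | nil => simp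
  | cons a l ih =>
    cases a <;> simp only [List.length_cons, List.count_cons, ih] <;> simp <;> omega

lemma length_eq_two_mul_of_bal (l : List Bool) (h : bal l = 0) :
    l.length = 2 * l.count true := by
  have := bal_eq_counts l
  have h2 := length_eq_counts l
  omega

/-- a Dyck word: all prefixes have nonnegative balance, total balance zero -/
def LDyck (l : List Bool) : Prop :=
  (∀ t : ℕ, 0 ≤ bal (l.take t)) ∧ bal l = 0

lemma LDyck_nil : LDyck [] := ⟨fun t => by simp, rfl⟩


-- prefix version
lemma LDyck.prefix_nonneg {l p : List Bool} (h : LDyck l) (hp : p <+: l) : 0 ≤ bal p := by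
  have := h.1 p.length
  rwa [List.prefix_iff_eq_take.mp hp]

/-- split a walk at the first return to level 0, given current depth `d` -/
def go : ℕ → List Bool → List Bool × List Bool
  | _, [] => ([], [])
  | d, true :: r => ((go (d+1) r).1.cons true, (go (d+1) r).2)
  | d, false :: r =>
    if d = 1 then ([], r) else ((go (d-1) r).1.cons false, (go (d-1) r).2)

lemma go_spec : ∀ (t : List Bool) (d : ℕ), 1 ≤ d →
    (∀ i : ℕ, 0 ≤ (d : ℤ) + bal (t.take i)) → bal t = -(d : ℤ) →
    t = (go d t).1 ++ false :: (go d t).2 ∧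
      (∀ i : ℕ, 1 ≤ (d : ℤ) + bal ((go d t).1.take i)) ∧
      bal (go d t).1 = 1 - (d : ℤ) := by
  intro t
  induction t with
  | nil => intro d hd _ hbal; simp at hbal; omega
  | cons a r ih =>
    intro d hd hpre hbal
    cases a with
    | true =>
      have hbr : bal r = -((d:ℕ)+1 : ℤ) := by
        simp at hbal; push_cast; omega
      have hpr : ∀ i : ℕ, 0 ≤ ((d+1 : ℕ) : ℤ) + bal (r.take i) := by
        intro i
        have := hpre (i+1)
        simp [List.take_succ_cons] at this
        push_cast; push_cast at this; omega
      obtain ⟨h1, h2, h3⟩ := ih (d+1) (by omega) hpr (by push_cast at hbr ⊢; omega)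
      refine ⟨?_, ?_, ?_⟩
      · simp [go]; exact h1
      · intro i
        cases i with
        | zero => simp; omega
        | succ j =>
          have := h2 j
          simp [go, List.take_succ_cons]
          push_cast at this ⊢; omega
      · simp [go]; push_cast at h3 ⊢; omega
    | false =>
      by_cases hd1 : d = 1
      · subst hd1
        refine ⟨?_, ?_, ?_⟩
        · simp [go]
        · intro i; simp [go]
        · simp [go]
      · have hd2 : 2 ≤ d := by omega
        have hbr : bal r = -((d-1 : ℕ) : ℤ) := by
          simp at hbal
          have : ((d-1:ℕ):ℤ) = (d:ℤ) - 1 := by push_cast [Nat.cast_sub] <;> omega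
          omega
        have hpr : ∀ i : ℕ, 0 ≤ ((d-1 : ℕ) : ℤ) + bal (r.take i) := by
          intro i
          have := hpre (i+1)
          simp [List.take_succ_cons] at this
          have hc : ((d-1:ℕ):ℤ) = (d:ℤ) - 1 := by push_cast [Nat.cast_sub] <;> omega
          omega
        obtain ⟨h1, h2, h3⟩ := ih (d-1) (by omega) hpr hbr
        have hc : ((d-1:ℕ):ℤ) = (d:ℤ) - 1 := by push_cast [Nat.cast_sub] <;> omega
        refine ⟨?_, ?_, ?_⟩
        · simp [go, hd1]; exact h1
        · intro i
          cases i with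
          | zero => simp; omega
          | succ j =>
            have := h2 j
            simp [go, hd1, List.take_succ_cons]
            omega
        · simp [go, hd1]; omega

/-- first-return decomposition: existence -/
lemma exists_decomp {l : List Bool} (h : LDyck l) (hne : l ≠ []) :
    ∃ p q, l = true :: p ++ false :: q ∧ LDyck p ∧ LDyck q := by
  obtain ⟨a, r, rfl⟩ := List.exists_cons_of_ne_nil hne
  have ha : a = true := by
    by_contra hf
    have := h.1 1
    cases a
    · simp [bal] at this
    · exact hf rfl
  subst ha
  have hbr : bal r = -(1 : ℤ) := by have := h.2; simp at this; omega
  have hpr : ∀ i : ℕ, 0 ≤ (1 : ℤ) + bal (r.take i) := by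
    intro i
    have := h.1 (i+1)
    simpa [List.take_succ_cons] using this
  obtain ⟨h1, h2, h3⟩ := go_spec r 1 le_rfl (by exact_mod_cast hpr) (by exact_mod_cast hbr)
  set p := (go 1 r).1 with hp
  set q := (go 1 r).2 with hq
  clear_value p q
  refine ⟨p, q, by rw [List.cons_append, ← h1], ⟨?_, by simpa using h3⟩, ?_, ?_⟩
  · intro t; have := h2 t; simp at this; omega
  · intro t
    have := h.1 (p.length + 2 + t)
    rw [h1, show p.length + 2 + t = (p.length + (t + 1)) + 1 by omega,
      List.take_succ_cons, List.take_length_add_append, bal_cons, bal_append, List.take_succ_cons,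
      bal_cons] at this
    simp only [Nat.cast_one] at h3
    simp only [if_pos rfl, if_neg (by simp : ¬ (false = true))] at this
    omega
  · have h0 := h.2
    rw [h1] at h0
    simp [bal_append] at h0 h3 ⊢
    omega

/-- uniqueness of the decomposition -/
lemma decomp_unique {p q p' q' : List Bool} (hp : LDyck p) (hp' : LDyck p')
    (h : p ++ false :: q = p' ++ false :: q') : p = p' ∧ q = q' := by
  have hlen : p.length = p'.length := by
    by_contra hne
    rcases Nat.lt_or_ge p.length p'.length with hlt | hge
    · -- p ++ [false] is a prefix of p'
      have h1 : (p ++ [false]) <+: (p' ++ false :: q') := by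
        rw [← h]
        exact ⟨q, by simp⟩
      have h2 : (p ++ [false]) <+: p' := by
        refine List.prefix_of_prefix_length_le h1 (List.prefix_append _ _) ?_
        simp; omega
      have := hp'.prefix_nonneg h2
      rw [bal_append] at this
      simp [hp.2] at this
    · have hlt : p'.length < p.length := by omega
      have h1 : (p' ++ [false]) <+: (p ++ false :: q) := by
        rw [h]
        exact ⟨q', by simp⟩
      have h2 : (p' ++ [false]) <+: p := by
        refine List.prefix_of_prefix_length_le h1 (List.prefix_append _ _) ?_
        simp; omega
      have := hp.prefix_nonneg h2
      rw [bal_append] at this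
      simp [hp'.2] at this
  have := List.append_inj h hlen
  exact ⟨this.1, by simpa using this.2⟩

/-- gluing: the decomposition of Dyck words is a Dyck word -/
lemma LDyck_glue {p q : List Bool} (hp : LDyck p) (hq : LDyck q) :
    LDyck (true :: p ++ false :: q) := by
  constructor
  · intro t
    cases t with
    | zero => simp
    | succ i =>
      rw [List.cons_append, List.take_succ_cons, bal_cons, if_pos rfl]
      rcases le_or_gt i p.length with hi | hi
      · rw [List.take_append_of_le_length hi]
        have := hp.1 i
        omega
      · rw [List.take_append, List.take_of_length_le (by omega),
          bal_append, hp.2]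
        obtain ⟨j, hj⟩ : ∃ j, i - p.length = j + 1 := ⟨i - p.length - 1, by omega⟩
        rw [hj, List.take_succ_cons, bal_cons, if_neg (by simp : ¬ (false = true))]
        have := hq.1 j
        omega
  · simp [bal_append, hp.2, hq.2]


-- ===== translation between `Fin`-encoded paths and lists =====

lemma dyckHeight_succ (m : ℕ) (s : Fin (2*m) → Bool) (t : ℕ) (ht : t < 2*m) :
    dyckHeight m s (t+1) = dyckHeight m s t + (if s ⟨t, ht⟩ then 1 else -1) := by
  unfold dyckHeight
  have h : Finset.univ.filter (fun u : Fin (2*m) => (u:ℕ) < t+1)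
      = insert ⟨t, ht⟩ (Finset.univ.filter (fun u : Fin (2*m) => (u:ℕ) < t)) := by
    ext u
    simp [Fin.ext_iff]
    omega
  rw [h, Finset.sum_insert (by simp)]
  ring

lemma bal_take_succ (l : List Bool) (t : ℕ) (ht : t < l.length) :
    bal (l.take (t+1)) = bal (l.take t) + (if l.get ⟨t, ht⟩ then 1 else -1) := by
  rw [List.take_succ]
  have h : l[t]? = some (l.get ⟨t, ht⟩) := by
    rw [List.getElem?_eq_getElem ht]
    rfl
  rw [h, Option.toList_some, bal_append]
  simp [bal]

lemma height_eq (m : ℕ) (s : Fin (2*m) → Bool) (t : ℕ) (h : t ≤ 2*m) :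
    dyckHeight m s t = bal ((List.ofFn s).take t) := by
  induction t with
  | zero => simp [dyckHeight]
  | succ t ih =>
    have ht : t < 2*m := h
    rw [dyckHeight_succ m s t ht, ih (le_of_lt ht),
      bal_take_succ _ t (by simp [ht])]
    congr 2
    simp

lemma isDyck_iff (m : ℕ) (s : Fin (2*m) → Bool) : IsDyck m s ↔ LDyck (List.ofFn s) := by
  have hall : bal (List.ofFn s) = dyckHeight m s (2*m) := by
    rw [height_eq m s (2*m) le_rfl, List.take_of_length_le (by simp)]
  constructor
  · rintro ⟨h1, h2⟩
    constructor
    · intro t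
      rcases le_or_gt t (2*m) with h | h
      · rw [← height_eq m s t h]; exact h1 t h
      · rw [List.take_of_length_le (by simp; omega), hall, h2]
    · rw [hall, h2]
  · rintro ⟨h1, h2⟩
    constructor
    · intro t ht; rw [height_eq m s t ht]; exact h1 t
    · rw [← hall, h2]

lemma cnt_ofFn (n : ℕ) (s : Fin n → Bool) (b : Bool) :
    cnt b (List.ofFn s) = (Finset.univ.filter
      (fun u : Fin n => (u : ℕ) % 2 = (if b then 0 else 1) ∧ s u = true)).card := by
  induction n generalizing b with
  | zero => simp
  | succ n ih =>
    rw [List.ofFn_succ, cnt_cons, ih (fun i => s i.succ) (!b)]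
    rw [Finset.card_filter, Finset.card_filter, Fin.sum_univ_succ]
    have hz : ((0 : Fin (n+1)) : ℕ) % 2 = 0 := by simp
    have hcongr : ∀ u : Fin n,
        (if ((u.succ : Fin (n+1)) : ℕ) % 2 = (if b then 0 else 1) ∧ s u.succ = true
          then (1:ℕ) else 0)
        = (if ((u : ℕ) % 2 = (if !b then 0 else 1) ∧ s u.succ = true) then 1 else 0) := by
      intro u
      have : (((u.succ : Fin (n+1)) : ℕ) % 2 = (if b then 0 else 1))
          ↔ ((u : ℕ) % 2 = (if !b then 0 else 1)) := by
        cases b <;> simp [Fin.val_succ] <;> omega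
      simp only [this]
    simp only [hcongr]
    cases b <;> cases hs0 : s 0 <;> simp [hz, hs0]

lemma upEven_eq (m : ℕ) (s : Fin (2*m) → Bool) :
    upEven m s = cnt true (List.ofFn s) := by
  rw [cnt_ofFn, upEven]
  simp

lemma upOdd_eq (m : ℕ) (s : Fin (2*m) → Bool) :
    upOdd m s = cnt false (List.ofFn s) := by
  rw [cnt_ofFn, upOdd]
  simp

open Classical in
noncomputable def dyckSet (n : ℕ) : Finset (List Bool) :=
  ((Finset.univ : Finset (Fin n → Bool)).image List.ofFn).filter LDyck

lemma mem_dyckSet {n : ℕ} {l : List Bool} :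
    l ∈ dyckSet n ↔ l.length = n ∧ LDyck l := by
  classical
  simp only [dyckSet, Finset.mem_filter, Finset.mem_image, Finset.mem_univ, true_and]
  constructor
  · rintro ⟨⟨s, rfl⟩, h⟩
    exact ⟨by simp, h⟩
  · rintro ⟨hl, h⟩
    subst hl
    exact ⟨⟨l.get, List.ofFn_get l⟩, h⟩

lemma dyckG_eq (m : ℕ) (y : ℝ) :
    dyckG m y = ∑ l ∈ dyckSet (2*m), y ^ cnt true l := by
  classical
  rw [dyckG, dyckSet, Finset.sum_filter, Finset.sum_image (by
    intro a _ b _ h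
    exact List.ofFn_injective h)]
  apply Finset.sum_congr rfl
  intro s _
  by_cases h : LDyck (List.ofFn s)
  · rw [if_pos h, if_pos ((isDyck_iff m s).mpr h), upEven_eq]
  · rw [if_neg h, if_neg (fun hh => h ((isDyck_iff m s).mp hh))]

-- ===== weighted sums and recurrence =====

noncomputable def WA (y : ℝ) (m : ℕ) : ℝ := ∑ l ∈ dyckSet (2*m), y ^ cnt true l
noncomputable def WB (y : ℝ) (m : ℕ) : ℝ := ∑ l ∈ dyckSet (2*m), y ^ cnt false l

lemma dyckSet_zero : dyckSet 0 = {[]} := by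
  ext l
  simp only [mem_dyckSet, List.length_eq_zero_iff, Finset.mem_singleton]
  constructor
  · rintro ⟨rfl, _⟩; rfl
  · rintro rfl; exact ⟨rfl, LDyck_nil⟩

@[simp] lemma WA_zero (y : ℝ) : WA y 0 = 1 := by simp [WA, dyckSet_zero]
@[simp] lemma WB_zero (y : ℝ) : WB y 0 = 1 := by simp [WB, dyckSet_zero]

set_option maxHeartbeats 1000000 in
lemma sum_dyckSet_succ (m : ℕ) (f : List Bool → ℝ) :
    ∑ l ∈ dyckSet (2*(m+1)), f l
      = ∑ k ∈ Finset.range (m+1), ∑ p ∈ dyckSet (2*k), ∑ q ∈ dyckSet (2*(m-k)),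
          f (true :: p ++ false :: q) := by
  have hrw : ∀ k ∈ Finset.range (m+1),
      ∑ p ∈ dyckSet (2*k), ∑ q ∈ dyckSet (2*(m-k)), f (true :: p ++ false :: q)
      = ∑ x ∈ dyckSet (2*k) ×ˢ dyckSet (2*(m-k)), f (true :: x.1 ++ false :: x.2) := by
    intro k _
    rw [Finset.sum_product]
  rw [Finset.sum_congr rfl hrw,
    show (∑ k ∈ Finset.range (m+1), ∑ x ∈ dyckSet (2*k) ×ˢ dyckSet (2*(m-k)),
        f (true :: x.1 ++ false :: x.2))
      = ∑ x ∈ (Finset.range (m+1)).sigma (fun k => dyckSet (2*k) ×ˢ dyckSet (2*(m-k))),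
        f (true :: x.2.1 ++ false :: x.2.2) from Finset.sum_sigma (Finset.range (m+1)) (fun k => dyckSet (2*k) ×ˢ dyckSet (2*(m-k))) (fun x => f (true :: x.2.1 ++ false :: x.2.2)) |>.symm]
  symm
  apply Finset.sum_bij (i := fun x _ => true :: x.2.1 ++ false :: x.2.2)
  · rintro ⟨k, p, q⟩ hx
    simp only [Finset.mem_sigma, Finset.mem_range, Finset.mem_product] at hx
    obtain ⟨hk, hp, hq⟩ := hx
    rw [mem_dyckSet] at hp hq ⊢
    refine ⟨?_, LDyck_glue hp.2 hq.2⟩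
    simp only [List.cons_append, List.length_cons, List.length_append, hp.1, hq.1]
    omega
  · rintro ⟨k1, p1, q1⟩ h1 ⟨k2, p2, q2⟩ h2 heq
    simp only [Finset.mem_sigma, Finset.mem_range, Finset.mem_product, mem_dyckSet] at h1 h2
    simp only [List.cons_append, List.cons.injEq, true_and] at heq
    obtain ⟨hp, hq⟩ := decomp_unique h1.2.1.2 h2.2.1.2 heq
    have : k1 = k2 := by
      have e1 := h1.2.1.1
      have e2 := h2.2.1.1
      rw [hp] at e1
      omega
    subst this; subst hp; subst hq
    rfl
  · intro l hl
    rw [mem_dyckSet] at hl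
    have hne : l ≠ [] := by
      intro h
      have h0 := hl.1
      rw [h] at h0
      simp only [List.length_nil] at h0
      omega
    obtain ⟨p, q, hdec, hp, hq⟩ := exists_decomp hl.2 hne
    have hplen := length_eq_two_mul_of_bal p hp.2
    set k := p.count true with hk
    have hlen : l.length = 2*(m+1) := hl.1
    rw [hdec] at hlen
    simp only [List.cons_append, List.length_cons, List.length_append,
      List.length_cons] at hlen
    have hkm : k ≤ m := by omega
    have hqlen : q.length = 2*(m-k) := by omega
    refine ⟨⟨k, p, q⟩, ?_, hdec.symm⟩
    simp only [Finset.mem_sigma, Finset.mem_range, Finset.mem_product, mem_dyckSet]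
    exact ⟨by omega, ⟨by omega, hp⟩, ⟨hqlen, hq⟩⟩
  · rintro ⟨k, p, q⟩ _
    rfl

lemma WA_succ (y : ℝ) (m : ℕ) :
    WA y (m+1) = y * ∑ k ∈ Finset.range (m+1), WB y k * WA y (m-k) := by
  rw [WA, sum_dyckSet_succ, Finset.mul_sum]
  apply Finset.sum_congr rfl
  intro k hk
  have hterm : ∀ p ∈ dyckSet (2*k), ∀ q ∈ dyckSet (2*(m-k)),
      y ^ cnt true (true :: p ++ false :: q)
        = (y * y ^ cnt false p) * y ^ cnt true q := by
    intro p hp q hq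
    have hplen : p.length % 2 = 0 := by
      rw [(mem_dyckSet.mp hp).1]; omega
    have : cnt true (true :: p ++ false :: q) = 1 + cnt false p + cnt true q := by
      rw [List.cons_append, cnt_cons, cnt_append, hplen]
      simp
      omega
    rw [this, pow_add, pow_add, pow_one]
  calc ∑ p ∈ dyckSet (2*k), ∑ q ∈ dyckSet (2*(m-k)), y ^ cnt true (true :: p ++ false :: q)
      = ∑ p ∈ dyckSet (2*k), ∑ q ∈ dyckSet (2*(m-k)),
          (y * y ^ cnt false p) * y ^ cnt true q := by
        apply Finset.sum_congr rfl
        intro p hp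
        exact Finset.sum_congr rfl (fun q hq => hterm p hp q hq)
    _ = (∑ p ∈ dyckSet (2*k), y * y ^ cnt false p) * ∑ q ∈ dyckSet (2*(m-k)), y ^ cnt true q := by
        rw [Finset.sum_mul]
        apply Finset.sum_congr rfl
        intro p _
        rw [Finset.mul_sum]
    _ = y * (WB y k * WA y (m-k)) := by
        rw [WB, WA, ← Finset.mul_sum, mul_assoc]

lemma WB_succ (y : ℝ) (m : ℕ) :
    WB y (m+1) = ∑ k ∈ Finset.range (m+1), WA y k * WB y (m-k) := by
  rw [WB, sum_dyckSet_succ]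
  apply Finset.sum_congr rfl
  intro k hk
  have hterm : ∀ p ∈ dyckSet (2*k), ∀ q ∈ dyckSet (2*(m-k)),
      y ^ cnt false (true :: p ++ false :: q)
        = y ^ cnt true p * y ^ cnt false q := by
    intro p hp q hq
    have hplen : p.length % 2 = 0 := by
      rw [(mem_dyckSet.mp hp).1]; omega
    have : cnt false (true :: p ++ false :: q) = cnt true p + cnt false q := by
      rw [List.cons_append, cnt_cons, cnt_append, hplen]
      simp
    rw [this, pow_add]
  calc ∑ p ∈ dyckSet (2*k), ∑ q ∈ dyckSet (2*(m-k)), y ^ cnt false (true :: p ++ false :: q)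
      = ∑ p ∈ dyckSet (2*k), ∑ q ∈ dyckSet (2*(m-k)),
          y ^ cnt true p * y ^ cnt false q := by
        apply Finset.sum_congr rfl
        intro p hp
        exact Finset.sum_congr rfl (fun q hq => hterm p hp q hq)
    _ = WA y k * WB y (m-k) := by
        rw [WA, WB, Finset.sum_mul]
        apply Finset.sum_congr rfl
        intro p _
        rw [Finset.mul_sum]


-- ===== analytic lemmas =====

lemma sum_conv_le (u v : ℕ → ℝ) (hu : ∀ i, 0 ≤ u i) (hv : ∀ i, 0 ≤ v i) (n : ℕ) :
    ∑ i ∈ Finset.range n, ∑ k ∈ Finset.range (i+1), u k * v (i-k)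
      ≤ (∑ i ∈ Finset.range n, u i) * (∑ i ∈ Finset.range n, v i) := by
  have h1 : ∑ i ∈ Finset.range n, ∑ k ∈ Finset.range (i+1), u k * v (i-k)
      = ∑ x ∈ (Finset.range n).sigma (fun i => Finset.range (i+1)), u x.2 * v (x.1 - x.2) :=
    (Finset.sum_sigma (Finset.range n) (fun i => Finset.range (i+1))
      (fun x => u x.2 * v (x.1 - x.2))).symm
  have hinj : ∀ x ∈ (Finset.range n).sigma (fun i => Finset.range (i+1)),
      ∀ x' ∈ (Finset.range n).sigma (fun i => Finset.range (i+1)),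
      (fun x : (_ : ℕ) × ℕ => ((x.2, x.1 - x.2) : ℕ × ℕ)) x
        = (fun x : (_ : ℕ) × ℕ => ((x.2, x.1 - x.2) : ℕ × ℕ)) x' → x = x' := by
    rintro ⟨i1, k1⟩ h1' ⟨i2, k2⟩ h2' heq
    simp only [Finset.mem_sigma, Finset.mem_range] at h1' h2'
    simp only [Prod.mk.injEq] at heq
    have : i1 = i2 := by omega
    subst this
    simp [heq.1]
  have h2 : ∑ x ∈ (Finset.range n).sigma (fun i => Finset.range (i+1)), u x.2 * v (x.1 - x.2)
      = ∑ p ∈ ((Finset.range n).sigma (fun i => Finset.range (i+1))).image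
          (fun x => (x.2, x.1 - x.2)), u p.1 * v p.2 :=
    (Finset.sum_image (f := fun p : ℕ × ℕ => u p.1 * v p.2) hinj).symm
  rw [h1, h2, Finset.sum_mul_sum]
  rw [show (∑ i ∈ Finset.range n, ∑ j ∈ Finset.range n, u i * v j)
      = ∑ p ∈ Finset.range n ×ˢ Finset.range n, u p.1 * v p.2 from
    (Finset.sum_product (Finset.range n) (Finset.range n) (fun p => u p.1 * v p.2)).symm]
  apply Finset.sum_le_sum_of_subset_of_nonneg
  · intro p hp
    simp only [Finset.mem_image, Finset.mem_sigma, Finset.mem_range] at hp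
    obtain ⟨x, hx, rfl⟩ := hp
    simp only [Finset.mem_product, Finset.mem_range]
    omega
  · intro p _ _
    exact mul_nonneg (hu _) (hv _)

lemma WA_succ_mul (y z : ℝ) (i : ℕ) :
    WA y (i+1) * z^(i+1) = (y*z) *
      ∑ k ∈ Finset.range (i+1), (WB y k * z^k) * (WA y (i-k) * z^(i-k)) := by
  rw [WA_succ, Finset.mul_sum, Finset.mul_sum, Finset.sum_mul]
  apply Finset.sum_congr rfl
  intro k hk
  have hk' : k ≤ i := by
    have := Finset.mem_range.mp hk
    omega
  have hz : z^k * z^(i-k) = z^i := by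
    rw [← pow_add]
    congr 1
    omega
  rw [pow_succ, ← hz]
  ring

lemma WB_succ_mul (y z : ℝ) (i : ℕ) :
    WB y (i+1) * z^(i+1) = z *
      ∑ k ∈ Finset.range (i+1), (WA y k * z^k) * (WB y (i-k) * z^(i-k)) := by
  rw [WB_succ, Finset.mul_sum, Finset.sum_mul]
  apply Finset.sum_congr rfl
  intro k hk
  have hk' : k ≤ i := by
    have := Finset.mem_range.mp hk
    omega
  have hz : z^k * z^(i-k) = z^i := by
    rw [← pow_add]
    congr 1
    omega
  rw [pow_succ, ← hz]
  ring

lemma WA_nonneg {y : ℝ} (hy : 0 ≤ y) (m : ℕ) : 0 ≤ WA y m :=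
  Finset.sum_nonneg fun _ _ => pow_nonneg hy _

lemma WB_nonneg {y : ℝ} (hy : 0 ≤ y) (m : ℕ) : 0 ≤ WB y m :=
  Finset.sum_nonneg fun _ _ => pow_nonneg hy _

end DyckAux

set_option maxHeartbeats 1000000 in
open DyckAux in
/-- **Formula (4.4)** of Soshnikov.  For `y ≥ 1` and `0 < z < 1/(√y+1)²`, the series
`Σ_{m≥0} g_m(y) z^m` converges, the expression `((y−1)z−1)² − 4z` is nonnegative, and
the sum equals `(−yz + z + 1 − √(((y−1)z−1)² − 4z)) / (2z)`. -/
theorem dyckG_generating_function (y z : ℝ) (hy : 1 ≤ y)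
    (hz0 : 0 < z) (hz1 : z < 1 / (Real.sqrt y + 1) ^ 2) :
    0 ≤ ((y - 1) * z - 1) ^ 2 - 4 * z ∧
      HasSum (fun m => dyckG m y * z ^ m)
        ((-(y * z) + z + 1 - Real.sqrt (((y - 1) * z - 1) ^ 2 - 4 * z)) / (2 * z)) := by
  have hy0 : (0:ℝ) ≤ y := by linarith
  have ha2 : (Real.sqrt y)^2 = y := Real.sq_sqrt hy0
  have ha1 : 1 ≤ Real.sqrt y := by
    nlinarith [Real.sqrt_nonneg y, Real.sq_sqrt hy0]
  have ha0 : (0:ℝ) < (Real.sqrt y + 1)^2 := by positivity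
  have hz1' : z * (Real.sqrt y + 1)^2 < 1 := by
    rw [div_eq_inv_mul, mul_one] at hz1
    calc z * (Real.sqrt y + 1)^2 < ((Real.sqrt y + 1)^2)⁻¹ * (Real.sqrt y + 1)^2 :=
          mul_lt_mul_of_pos_right hz1 ha0
      _ = 1 := inv_mul_cancel₀ (ne_of_gt ha0)
  have hf2 : 0 < 1 - (Real.sqrt y + 1)^2 * z := by nlinarith
  have hf1 : 0 < 1 - (Real.sqrt y - 1)^2 * z := by nlinarith [Real.sqrt_nonneg y]
  have hfac : ((y - 1) * z - 1) ^ 2 - 4 * z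
      = (1 - (Real.sqrt y - 1)^2*z) * (1 - (Real.sqrt y + 1)^2*z) := by
    linear_combination (2*z - z^2*(y + (Real.sqrt y)^2 - 2)) * ha2
  have hD : 0 < ((y - 1) * z - 1) ^ 2 - 4 * z := by
    rw [hfac]; exact mul_pos hf1 hf2
  refine ⟨hD.le, ?_⟩
  have hyzz : 1*z ≤ y*z := mul_le_mul_of_nonneg_right hy hz0.le
  have hc0 : 0 < 1 + z - y*z := by nlinarith [Real.sqrt_nonneg y]
  set s : ℝ := Real.sqrt (((y - 1) * z - 1) ^ 2 - 4 * z) with hs_def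
  have hs2 : s^2 = ((y - 1) * z - 1) ^ 2 - 4 * z := Real.sq_sqrt hD.le
  have hs0 : 0 < s := Real.sqrt_pos.mpr hD
  have hsc : s < 1 + z - y*z := by nlinarith [hs2, hs0, hc0]
  obtain ⟨A, hA_def⟩ : ∃ A : ℝ, A = (1 + z - y*z - s)/(2*z) := ⟨_, rfl⟩
  have h2zA : 2*z*A = 1 + z - y*z - s := by
    rw [hA_def]; field_simp
  have hA0 : 0 < A := by
    rw [hA_def]; apply div_pos <;> linarith
  have he1 : (1 + z - y*z) - 2*z*A - s = 0 := by linarith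
  have he2 : s^2 - ((1 + z - y*z)^2 - 4*z) = 0 := by linear_combination hs2
  have h4A : (4*z)*(z*A^2 - (1 + z - y*z)*A + 1) = 0 := by
    linear_combination (1 + z - y*z - 2*z*A + s) * he1 + he2
  have hquadA : z*A^2 - (1 + z - y*z)*A + 1 = 0 := by
    rcases mul_eq_zero.mp h4A with h | h
    · linarith
    · exact h
  have h1zA : 0 < 1 - z*A := by linarith
  obtain ⟨B, hB_def⟩ : ∃ B : ℝ, B = 1/(1 - z*A) := ⟨_, rfl⟩
  have hB0 : 0 < B := by rw [hB_def]; exact div_pos one_pos h1zA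
  have hBA1 : B * (1 - z*A) = 1 := by
    rw [hB_def]; field_simp
  have hBid : B = 1 + z*A*B := by linear_combination hBA1
  have hAid : A = 1 + y*z*B*A := by
    have hG : (A - 1 - y*z*B*A) * (1 - z*A) = 0 := by
      linear_combination (-1)*hquadA + (-(y*z*A))*hBA1
    have := (mul_eq_zero.mp hG).resolve_right (by linarith)
    linarith
  -- partial sums are bounded
  have hfA_nonneg : ∀ i, 0 ≤ WA y i * z^i :=
    fun i => mul_nonneg (WA_nonneg hy0 i) (pow_nonneg hz0.le i)
  have hfB_nonneg : ∀ i, 0 ≤ WB y i * z^i :=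
    fun i => mul_nonneg (WB_nonneg hy0 i) (pow_nonneg hz0.le i)
  have key : ∀ n, (∑ i ∈ Finset.range n, WA y i * z^i) ≤ A ∧
      (∑ i ∈ Finset.range n, WB y i * z^i) ≤ B := by
    intro n
    induction n with
    | zero => simpa using ⟨hA0.le, hB0.le⟩
    | succ n ih =>
      have hSA0 : 0 ≤ ∑ i ∈ Finset.range n, WA y i * z^i :=
        Finset.sum_nonneg fun i _ => hfA_nonneg i
      have hSB0 : 0 ≤ ∑ i ∈ Finset.range n, WB y i * z^i :=
        Finset.sum_nonneg fun i _ => hfB_nonneg i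
      have hconvA : ∑ i ∈ Finset.range n, (WA y (i+1) * z^(i+1)) ≤ y*z*(B*A) := by
        rw [Finset.sum_congr rfl (fun i _ => WA_succ_mul y z i), ← Finset.mul_sum]
        have h2 := sum_conv_le (fun k => WB y k * z^k) (fun k => WA y k * z^k)
          hfB_nonneg hfA_nonneg n
        have h3 : (∑ i ∈ Finset.range n, WB y i * z^i) * (∑ i ∈ Finset.range n, WA y i * z^i)
            ≤ B * A := mul_le_mul ih.2 ih.1 hSA0 hB0.le
        have hyz : (0:ℝ) ≤ y*z := by positivity
        exact mul_le_mul_of_nonneg_left (le_trans h2 h3) hyz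
      have hconvB : ∑ i ∈ Finset.range n, (WB y (i+1) * z^(i+1)) ≤ z*(A*B) := by
        rw [Finset.sum_congr rfl (fun i _ => WB_succ_mul y z i), ← Finset.mul_sum]
        have h2 := sum_conv_le (fun k => WA y k * z^k) (fun k => WB y k * z^k)
          hfA_nonneg hfB_nonneg n
        have h3 : (∑ i ∈ Finset.range n, WA y i * z^i) * (∑ i ∈ Finset.range n, WB y i * z^i)
            ≤ A * B := mul_le_mul ih.1 ih.2 hSB0 hA0.le
        exact mul_le_mul_of_nonneg_left (le_trans h2 h3) hz0.le
      constructor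
      · rw [Finset.sum_range_succ']
        have h0 : WA y 0 * z^0 = 1 := by simp
        rw [h0]
        have : y*z*(B*A) + 1 = A := by linear_combination -hAid
        linarith
      · rw [Finset.sum_range_succ']
        have h0 : WB y 0 * z^0 = 1 := by simp
        rw [h0]
        have : z*(A*B) + 1 = B := by linear_combination -hBid
        linarith
  -- summability
  have sumA : Summable (fun i => WA y i * z^i) :=
    summable_of_sum_range_le hfA_nonneg (fun n => (key n).1)
  have sumB : Summable (fun i => WB y i * z^i) :=
    summable_of_sum_range_le hfB_nonneg (fun n => (key n).2)
  obtain ⟨S, hS_def⟩ : ∃ S : ℝ, S = ∑' i, WA y i * z^i := ⟨_, rfl⟩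
  obtain ⟨S', hS'_def⟩ : ∃ S' : ℝ, S' = ∑' i, WB y i * z^i := ⟨_, rfl⟩
  have hS_le : S ≤ A := by
    rw [hS_def]
    exact Summable.tsum_le_of_sum_range_le sumA (fun n => (key n).1)
  -- Cauchy products
  have hnormA : Summable (fun i => ‖WA y i * z^i‖) := by
    have h : (fun i => ‖WA y i * z^i‖) = fun i => WA y i * z^i :=
      funext fun i => Real.norm_of_nonneg (hfA_nonneg i)
    rw [h]; exact sumA
  have hnormB : Summable (fun i => ‖WB y i * z^i‖) := by
    have h : (fun i => ‖WB y i * z^i‖) = fun i => WB y i * z^i :=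
      funext fun i => Real.norm_of_nonneg (hfB_nonneg i)
    rw [h]; exact sumB
  have hshiftA : HasSum (fun i => WA y (i+1) * z^(i+1)) (y*z*(S'*S)) := by
    have h := (hasSum_sum_range_mul_of_summable_norm hnormB hnormA).mul_left (y*z)
    rw [← hS_def, ← hS'_def] at h
    have hfun : (fun i => WA y (i+1) * z^(i+1))
        = fun i => (y*z) * ∑ k ∈ Finset.range (i+1),
            (WB y k * z^k) * (WA y (i-k) * z^(i-k)) :=
      funext fun i => WA_succ_mul y z i
    rw [hfun]
    exact h
  have hshiftB : HasSum (fun i => WB y (i+1) * z^(i+1)) (z*(S*S')) := by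
    have h := (hasSum_sum_range_mul_of_summable_norm hnormA hnormB).mul_left z
    rw [← hS_def, ← hS'_def] at h
    have hfun : (fun i => WB y (i+1) * z^(i+1))
        = fun i => z * ∑ k ∈ Finset.range (i+1),
            (WA y k * z^k) * (WB y (i-k) * z^(i-k)) :=
      funext fun i => WB_succ_mul y z i
    rw [hfun]
    exact h
  have h1' : HasSum (fun i => WA y (i+1) * z^(i+1))
      (S - ∑ i ∈ Finset.range 1, WA y i * z^i) := by
    rw [hS_def]
    exact (hasSum_nat_add_iff' 1).mpr sumA.hasSum
  have h2' : HasSum (fun i => WB y (i+1) * z^(i+1))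
      (S' - ∑ i ∈ Finset.range 1, WB y i * z^i) := by
    rw [hS'_def]
    exact (hasSum_nat_add_iff' 1).mpr sumB.hasSum
  have eqA : y*z*(S'*S) = S - 1 := by
    have h := hshiftA.unique h1'
    simpa using h
  have eqB : z*(S*S') = S' - 1 := by
    have h := hshiftB.unique h2'
    simpa using h
  have heA : S - 1 - y*z*(S'*S) = 0 := by linarith
  have heB : S' - 1 - z*(S*S') = 0 := by linarith
  have hquadS : z*S^2 - (1 + z - y*z)*S + 1 = 0 := by
    linear_combination (z*S - 1) * heA - y*z*S * heB
  have hr2 : ((1 + z - y*z) - 2*z*S)^2 = s^2 := by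
    linear_combination (4*z)*hquadS - hs2
  have hrle : s ≤ (1 + z - y*z) - 2*z*S := by
    have h := mul_le_mul_of_nonneg_left hS_le (by linarith : (0:ℝ) ≤ 2*z)
    linarith [h2zA]
  have hus : 0 < ((1 + z - y*z) - 2*z*S) + s := by linarith
  have hrge : (1 + z - y*z) - 2*z*S ≤ s := by
    by_contra hcon
    push_neg at hcon
    have h1 : 0 < ((1 + z - y*z) - 2*z*S) - s := by linarith
    have h2 : (((1 + z - y*z) - 2*z*S) - s) * (((1 + z - y*z) - 2*z*S) + s) = 0 := by
      linear_combination hr2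
    have h3 : 0 < (((1 + z - y*z) - 2*z*S) - s) * (((1 + z - y*z) - 2*z*S) + s) :=
      mul_pos h1 hus
    linarith
  have hfinal : S = (-(y * z) + z + 1 - s) / (2 * z) := by
    have hnum : -(y*z) + z + 1 - s = 2*z*S := by linarith
    rw [hnum]
    field_simp
  have hfun2 : (fun m => dyckG m y * z^m) = (fun m => WA y m * z^m) :=
    funext fun m => by rw [dyckG_eq]; rfl
  rw [hfun2, ← hfinal, hS_def]
  exact sumA.hasSum
end
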